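/- arXiv:1310.4326 — 2 statements merged into one kernel-verified Lean document; each statement's English description precedes it below -/
import Mathlib

section
/- For k ∈ ℝ, the complex numbers λ₁(k) = −k²m − w₀ki and λ_{2,3}(k) = −(r₀² + k² + (w₀ + 2θ₀(c₀+c₁r₀))ki) ± √(r₀⁴ − c₁r₀(c₀+c₁r₀)k⁴ + r₀[c₀θ₀² + r₀²v'(r₀) + 2r₀v(r₀)]k + 2r₀θ₀c₁k³ i) satisfy: if k²m > 0, 2(r₀²+k²)² ≥ a, and 4(r₀²+k²)⁴ − 4a(r₀²+k²)² > b², where a = r₀⁴ − c₁r₀(c₀+c₁r₀)k⁴ + r₀[c₀θ₀² + r₀²v'(r₀) + 2r₀v(r₀)]k and b = 2r₀θ₀c₁k³, then Re λ₁(k) < 0 and Re λ_{2,3}(k) < 0. -/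
/-- Spectral stability: under the stated conditions the three eigenvalue branches
have negative real part. Here `v0 = v(r₀)` and `vp = v'(r₀)`. -/
theorem eigenvalues_neg_re
    (m w₀ r₀ θ₀ c₀ c₁ v0 vp k : ℝ) (hk : k ≠ 0)
    (a b : ℝ)
    (ha : a = r₀ ^ 4 - c₁ * r₀ * (c₀ + c₁ * r₀) * k ^ 4
        + r₀ * (c₀ * θ₀ ^ 2 + r₀ ^ 2 * vp + 2 * r₀ * v0) * k)
    (hb : b = 2 * r₀ * θ₀ * c₁ * k ^ 3)
    (h1 : 0 < k ^ 2 * m)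
    (h2 : a ≤ 2 * (r₀ ^ 2 + k ^ 2) ^ 2)
    (h3 : b ^ 2 < 4 * (r₀ ^ 2 + k ^ 2) ^ 4 - 4 * a * (r₀ ^ 2 + k ^ 2) ^ 2)
    (lam₁ lam₂ lam₃ : ℂ)
    (hl1 : lam₁ = -((k ^ 2 * m : ℝ) : ℂ) - ((w₀ * k : ℝ) : ℂ) * Complex.I)
    (hl2 : lam₂ = -(((r₀ ^ 2 + k ^ 2 : ℝ)) : ℂ)
        - (((w₀ + 2 * θ₀ * (c₀ + c₁ * r₀)) * k : ℝ) : ℂ) * Complex.I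
        + ((a : ℂ) + (b : ℂ) * Complex.I) ^ ((1 : ℂ) / 2))
    (hl3 : lam₃ = -(((r₀ ^ 2 + k ^ 2 : ℝ)) : ℂ)
        - (((w₀ + 2 * θ₀ * (c₀ + c₁ * r₀)) * k : ℝ) : ℂ) * Complex.I
        - ((a : ℂ) + (b : ℂ) * Complex.I) ^ ((1 : ℂ) / 2)) :
    lam₁.re < 0 ∧ lam₂.re < 0 ∧ lam₃.re < 0 := by
  have hk2 : (0:ℝ) < k ^ 2 := by positivity
  have hcpos : (0:ℝ) < r₀ ^ 2 + k ^ 2 := by positivity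
  have haR : a < (r₀ ^ 2 + k ^ 2) ^ 2 := by nlinarith [sq_nonneg b, sq_nonneg (r₀^2+k^2)]
  have hR2 : (0:ℝ) < (r₀ ^ 2 + k ^ 2) ^ 2 := by positivity
  have h2R : (0:ℝ) < 2 * (r₀ ^ 2 + k ^ 2) ^ 2 - a := by linarith
  have habs_lt : Real.sqrt (a ^ 2 + b ^ 2) < 2 * (r₀ ^ 2 + k ^ 2) ^ 2 - a := by
    rw [Real.sqrt_lt' h2R]
    nlinarith
  have hsre : (((a:ℂ) + (b:ℂ) * Complex.I) ^ ((1:ℂ)/2)).re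
      = Real.sqrt ((Real.sqrt (a ^ 2 + b ^ 2) + a) / 2) := by
    rw [one_div, Complex.cpow_inv_two_re, Complex.norm_add_mul_I]
    simp
  have hs_nonneg : 0 ≤ Real.sqrt ((Real.sqrt (a ^ 2 + b ^ 2) + a) / 2) := Real.sqrt_nonneg _
  have hs_lt : Real.sqrt ((Real.sqrt (a ^ 2 + b ^ 2) + a) / 2) < r₀ ^ 2 + k ^ 2 := by
    rw [Real.sqrt_lt' hcpos]
    linarith
  have hre2 : lam₂.re = -(r₀ ^ 2 + k ^ 2) + √((√(a ^ 2 + b ^ 2) + a) / 2) := by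
    rw [hl2, Complex.add_re, Complex.sub_re, Complex.neg_re, Complex.ofReal_re, hsre,
      Complex.mul_re, Complex.I_re, Complex.I_im, Complex.ofReal_im, Complex.ofReal_re]
    ring
  have hre3 : lam₃.re = -(r₀ ^ 2 + k ^ 2) - √((√(a ^ 2 + b ^ 2) + a) / 2) := by
    rw [hl3, Complex.sub_re, Complex.sub_re, Complex.neg_re, Complex.ofReal_re, hsre,
      Complex.mul_re, Complex.I_re, Complex.I_im, Complex.ofReal_im, Complex.ofReal_re]
    ring
  have hre1 : lam₁.re = -(k ^ 2 * m) := by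
    rw [hl1, Complex.sub_re, Complex.neg_re, Complex.ofReal_re,
      Complex.mul_re, Complex.I_re, Complex.I_im, Complex.ofReal_im, Complex.ofReal_re]
    ring
  exact ⟨by rw [hre1]; linarith, by rw [hre2]; linarith, by rw [hre3]; linarith⟩
end

section
/- Let a, b ∈ ℝ and R > 0 satisfy 2R² ≥ a and 4R⁴ − 4aR² > b². Then −R + (1/√2)·(√(a²+b²) + a)^{1/2} < 0; that is, the real part of −R + √(a+bi) (principal square root) is negative. -/
/-- Key stability inequality: if `2R² ≥ a` and `4R⁴ − 4aR² > b²` with `R > 0`, then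
`−R + (1/√2)(√(a²+b²)+a)^{1/2} < 0`, i.e. `Re(−R + √(a+bi)) < 0`. -/
theorem stability_inequality (a b R : ℝ) (hR : 0 < R)
    (h1 : a ≤ 2 * R ^ 2) (h2 : b ^ 2 < 4 * R ^ 4 - 4 * a * R ^ 2) :
    -R + (1 / Real.sqrt 2) * Real.sqrt (Real.sqrt (a ^ 2 + b ^ 2) + a) < 0 ∧
    ((-(R : ℂ)) + ((a : ℂ) + (b : ℂ) * Complex.I) ^ ((1 : ℂ) / 2)).re < 0 := by
  have hsub : 0 < 2 * R ^ 2 - a := by nlinarith [sq_nonneg b]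
  have hkey : Real.sqrt (a ^ 2 + b ^ 2) < 2 * R ^ 2 - a := by
    rw [Real.sqrt_lt' hsub]; nlinarith
  have hS : Real.sqrt (a ^ 2 + b ^ 2) + a < 2 * R ^ 2 := by linarith
  have h2pos : (0:ℝ) < Real.sqrt 2 := Real.sqrt_pos.mpr (by norm_num)
  have hmain : -R + (1 / Real.sqrt 2) * Real.sqrt (Real.sqrt (a ^ 2 + b ^ 2) + a) < 0 := by
    have hSnn : 0 ≤ Real.sqrt (a ^ 2 + b ^ 2) + a := by
      have : |a| ≤ Real.sqrt (a ^ 2 + b ^ 2) := by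
        rw [← Real.sqrt_sq_eq_abs]
        exact Real.sqrt_le_sqrt (by nlinarith [sq_nonneg b])
      cases abs_cases a with
      | inl h => linarith [h.1]
      | inr h => linarith [h.1]
    have hlt : Real.sqrt (Real.sqrt (a ^ 2 + b ^ 2) + a) < Real.sqrt 2 * R := by
      have : Real.sqrt (Real.sqrt (a ^ 2 + b ^ 2) + a) < Real.sqrt (2 * R ^ 2) :=
        Real.sqrt_lt_sqrt hSnn hS
      rwa [Real.sqrt_mul (by norm_num), Real.sqrt_sq hR.le] at this
    have : (1 / Real.sqrt 2) * Real.sqrt (Real.sqrt (a ^ 2 + b ^ 2) + a) < R := by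
      rw [div_mul_eq_mul_div, one_mul, div_lt_iff₀ h2pos, mul_comm]
      exact hlt
    linarith
  refine ⟨hmain, ?_⟩
  have hre : (((a : ℂ) + (b : ℂ) * Complex.I) ^ ((1 : ℂ) / 2)).re
      = Real.sqrt ((‖(a : ℂ) + (b : ℂ) * Complex.I‖ + a) / 2) := by
    rw [show (1 : ℂ) / 2 = (2⁻¹ : ℂ) by norm_num, Complex.cpow_inv_two_re]
    simp
  have habs : ‖(a : ℂ) + (b : ℂ) * Complex.I‖ = Real.sqrt (a ^ 2 + b ^ 2) := by
    rw [Complex.norm_def, Complex.normSq_apply]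
    simp; ring_nf
  have hdiv : Real.sqrt ((Real.sqrt (a ^ 2 + b ^ 2) + a) / 2)
      = (1 / Real.sqrt 2) * Real.sqrt (Real.sqrt (a ^ 2 + b ^ 2) + a) := by
    rw [show (Real.sqrt (a ^ 2 + b ^ 2) + a) / 2 = (Real.sqrt (a ^ 2 + b ^ 2) + a) * (1/2) by ring,
      Real.sqrt_mul' _ (by norm_num), mul_comm]
    congr 1
    rw [one_div, one_div, ← Real.sqrt_inv]
  rw [Complex.add_re, Complex.neg_re, Complex.ofReal_re, hre, habs, hdiv]
  exact hmain
end
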